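/- The group EU_V(D) for the hyperbolic plane (n = 1) is perfect: [EU_V(D), EU_V(D)] = EU_V(D). -/

import Mathlib

open scoped commutatorElement
set_option maxHeartbeats 1000000

/-- The group `EU_V(D)` for the hyperbolic `ε`-hermitian plane: the subgroup of the unit
group of `M₂(D)` generated by `B(s) = (1,s;0,1)` and `C(t) = (1,0;t,1)` with
`s, t ∈ S_D = { b : τ(b) = -ε·b }`. -/
def EUplane (D : Type*) [DivisionRing D] [StarRing D] (ε : D) :
    Subgroup (Matrix (Fin 2) (Fin 2) D)ˣ :=
  Subgroup.closure
    {G | ∃ s : D, star s = -ε * s ∧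
      (G.val = !![1, s; 0, 1] ∨ G.val = !![1, 0; s, 1])}

namespace EUplaneAux

variable {D : Type*} [DivisionRing D] [StarRing D]

/-- The unit `B(s)`. -/
def Bu (s : D) : (Matrix (Fin 2) (Fin 2) D)ˣ where
  val := !![1, s; 0, 1]
  inv := !![1, -s; 0, 1]
  val_inv := by rw [Matrix.mul_fin_two, Matrix.one_fin_two]; congr 1 <;> simp
  inv_val := by rw [Matrix.mul_fin_two, Matrix.one_fin_two]; congr 1 <;> simp

/-- The unit `C(s)`. -/
def Cu (s : D) : (Matrix (Fin 2) (Fin 2) D)ˣ where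
  val := !![1, 0; s, 1]
  inv := !![1, 0; -s, 1]
  val_inv := by rw [Matrix.mul_fin_two, Matrix.one_fin_two]; congr 1 <;> simp
  inv_val := by rw [Matrix.mul_fin_two, Matrix.one_fin_two]; congr 1 <;> simp

/-- The diagonal unit `diag(α, α⁻¹)` for `α ≠ 0`. -/
def Hu (α : D) (hα : α ≠ 0) : (Matrix (Fin 2) (Fin 2) D)ˣ where
  val := !![α, 0; 0, α⁻¹]
  inv := !![α⁻¹, 0; 0, α]
  val_inv := by
    rw [Matrix.mul_fin_two, Matrix.one_fin_two]
    congr 1 <;> simp [mul_inv_cancel₀ hα, inv_mul_cancel₀ hα]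
  inv_val := by
    rw [Matrix.mul_fin_two, Matrix.one_fin_two]
    congr 1 <;> simp [mul_inv_cancel₀ hα, inv_mul_cancel₀ hα]

theorem Bu_mem (ε : D) {s : D} (hs : star s = -ε * s) : Bu s ∈ EUplane D ε :=
  Subgroup.subset_closure ⟨s, hs, Or.inl rfl⟩

theorem Cu_mem (ε : D) {s : D} (hs : star s = -ε * s) : Cu s ∈ EUplane D ε :=
  Subgroup.subset_closure ⟨s, hs, Or.inr rfl⟩

theorem neg_inv_mem_S (ε : D) (hε : ε = 1 ∨ ε = -1) {s : D} (hs0 : s ≠ 0)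
    (hs : star s = -ε * s) : star (-s⁻¹) = -ε * (-s⁻¹) := by
  rcases hε with h | h <;> subst h <;>
    simp only [neg_one_mul, one_mul, neg_neg, star_neg, star_inv₀, hs, inv_neg] at * <;> simp

theorem neg_mem_S (ε : D) {s : D} (hs : star s = -ε * s) :
    star (-s) = -ε * (-s) := by
  rw [star_neg, hs]; simp [neg_mul, mul_neg]

/-- The Weyl element `w(s) = B(s) C(-s⁻¹) B(s)`. -/
def wu (s : D) : (Matrix (Fin 2) (Fin 2) D)ˣ := Bu s * Cu (-s⁻¹) * Bu s

theorem wu_val {s : D} (hs : s ≠ 0) : (wu s).val = !![0, s; -s⁻¹, 0] := by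
  show (!![1, s; 0, 1] * !![1, 0; -s⁻¹, 1] * !![1, s; 0, 1] : Matrix (Fin 2) (Fin 2) D) = _
  rw [Matrix.mul_fin_two, Matrix.mul_fin_two]
  congr 1 <;> simp [mul_inv_cancel₀ hs, inv_mul_cancel₀ hs] <;> ring_nf <;>
    simp [mul_inv_cancel₀ hs, inv_mul_cancel₀ hs]

theorem wu_mem (ε : D) (hε : ε = 1 ∨ ε = -1) {s : D} (hs0 : s ≠ 0)
    (hs : star s = -ε * s) : wu s ∈ EUplane D ε :=
  mul_mem (mul_mem (Bu_mem ε hs) (Cu_mem ε (neg_inv_mem_S ε hε hs0 hs))) (Bu_mem ε hs)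

theorem commB (α : D) (hα : α ≠ 0) (u : D) :
    ⁅Hu α hα, Bu u⁆ = Bu (α * u * α - u) := by
  apply Units.ext
  show (!![α, 0; 0, α⁻¹] * !![1, u; 0, 1] * !![α⁻¹, 0; 0, α] * !![1, -u; 0, 1] :
      Matrix (Fin 2) (Fin 2) D) = !![1, α * u * α - u; 0, 1]
  rw [Matrix.mul_fin_two, Matrix.mul_fin_two, Matrix.mul_fin_two]
  congr 1 <;> simp [mul_inv_cancel₀ hα, inv_mul_cancel₀ hα, sub_eq_neg_add]

theorem commC (α : D) (hα : α ≠ 0) (u : D) :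
    ⁅Hu α hα, Cu u⁆ = Cu (α⁻¹ * u * α⁻¹ - u) := by
  apply Units.ext
  show (!![α, 0; 0, α⁻¹] * !![1, 0; u, 1] * !![α⁻¹, 0; 0, α] * !![1, 0; -u, 1] :
      Matrix (Fin 2) (Fin 2) D) = !![1, 0; α⁻¹ * u * α⁻¹ - u, 1]
  rw [Matrix.mul_fin_two, Matrix.mul_fin_two, Matrix.mul_fin_two]
  congr 1 <;> simp [mul_inv_cancel₀ hα, inv_mul_cancel₀ hα, sub_eq_add_neg]

theorem smul_mem_S {F : Type*} [Field F] [Algebra F D]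
    (hstar : ∀ a : F, star (algebraMap F D a) = algebraMap F D a)
    (ε : D) (c : F) {v : D} (hv : star v = -ε * v) :
    star (algebraMap F D c * v) = -ε * (algebraMap F D c * v) := by
  rw [star_mul, hstar, hv, Algebra.commutes c v, mul_assoc]

theorem scal {F : Type*} [Field F] [Algebra F D] (b c : F) (v : D) :
    algebraMap F D b * (algebraMap F D c * v) * algebraMap F D b
      = algebraMap F D (b * c * b) * v := by
  rw [map_mul, map_mul, ← mul_assoc, mul_assoc (algebraMap F D b * algebraMap F D c),
    ← Algebra.commutes b v, ← mul_assoc]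

theorem key {F : Type*} [Field F] [Algebra F D] (b c : F) (hbc : b * c * b - c = 1) (v : D) :
    algebraMap F D b * (algebraMap F D c * v) * algebraMap F D b - algebraMap F D c * v = v := by
  rw [scal, ← sub_mul, ← map_sub, hbc, map_one, one_mul]

theorem coeff {F : Type*} [Field F] (b : F) (h2 : b ^ 2 - 1 ≠ 0) :
    b * (b ^ 2 - 1)⁻¹ * b - (b ^ 2 - 1)⁻¹ = 1 := by
  field_simp

theorem Hu_mem {F : Type*} [Field F] [Algebra F D]
    (hstar : ∀ a : F, star (algebraMap F D a) = algebraMap F D a)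
    (ε : D) (hε : ε = 1 ∨ ε = -1) {s : D} (hs0 : s ≠ 0) (hs : star s = -ε * s)
    (a : F) (hα : algebraMap F D a ≠ 0) :
    Hu (algebraMap F D a) hα ∈ EUplane D ε := by
  set α := algebraMap F D a with hαdef
  have hci : ∀ x : D, α⁻¹ * x = x * α⁻¹ := fun x => by
    rw [hαdef, ← map_inv₀]; exact Algebra.commutes _ _
  have ht0 : α⁻¹ * s ≠ 0 := mul_ne_zero (inv_ne_zero hα) hs0
  have hst : star (α⁻¹ * s) = -ε * (α⁻¹ * s) := by
    rw [star_mul, star_inv₀, hαdef, hstar, ← hαdef, hs, hci s, mul_assoc]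
  have e1 : s * (α⁻¹ * s)⁻¹ = α := by
    rw [mul_inv_rev, inv_inv, ← mul_assoc, mul_inv_cancel₀ hs0, one_mul]
  have e2 : s⁻¹ * (α⁻¹ * s) = α⁻¹ := by
    rw [hci s, ← mul_assoc, inv_mul_cancel₀ hs0, one_mul]
  have e1' : s * (s⁻¹ * α) = α := by
    rw [← mul_assoc, mul_inv_cancel₀ hs0, one_mul]
  have hw : Hu α hα = wu s * wu (-(α⁻¹ * s)) := by
    apply Units.ext
    rw [Units.val_mul, wu_val hs0, wu_val (neg_ne_zero.mpr ht0)]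
    show (!![α, 0; 0, α⁻¹] : Matrix (Fin 2) (Fin 2) D) = _
    rw [Matrix.mul_fin_two]
    congr 1 <;> simp [inv_neg, neg_mul, mul_neg, neg_neg, e1, e1', e2]
  rw [hw]
  exact mul_mem (wu_mem ε hε hs0 hs)
    (wu_mem ε hε (neg_ne_zero.mpr ht0) (neg_mem_S ε hst))

end EUplaneAux

/-- For `D` a division algebra over a (local, hence infinite) field `F`, with involution
`τ = star` whose fixed field is `F`, and `ε = ±1`, the group `EU_V(D)` of the hyperbolic
plane is perfect: `[EU_V(D), EU_V(D)] = EU_V(D)`. -/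
theorem EUplane_perfect {D : Type*} [DivisionRing D] [StarRing D]
    (F : Type*) [Field F] [Infinite F] [Algebra F D]
    (hstar : ∀ a : F, star (algebraMap F D a) = algebraMap F D a)
    (hfix : ∀ x : D, star x = x → x ∈ Set.range (algebraMap F D))
    (ε : D) (hε : ε = 1 ∨ ε = -1) :
    ⁅EUplane D ε, EUplane D ε⁆ = EUplane D ε := by
  classical
  open EUplaneAux in
  refine le_antisymm (Subgroup.commutator_le.mpr fun g hg h hh => ?_) ?_
  · show g * h * g⁻¹ * h⁻¹ ∈ _
    exact mul_mem (mul_mem (mul_mem hg hh) (inv_mem hg)) (inv_mem hh)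
  · refine (Subgroup.closure_le _).mpr ?_
    rintro G ⟨s, hs, hG⟩
    by_cases hs0 : s = 0
    · subst hs0
      have hG1 : G = 1 := by
        apply Units.ext
        rcases hG with h | h <;> rw [h, Units.val_one, Matrix.one_fin_two]
      rw [hG1]
      exact one_mem _
    · obtain ⟨a, ha⟩ := Infinite.exists_notMem_finset ({0, 1, -1} : Finset F)
      simp only [Finset.mem_insert, Finset.mem_singleton, not_or] at ha
      obtain ⟨ha0, ha1, ham1⟩ := ha
      have h2 : a ^ 2 - 1 ≠ 0 := by
        have hfac : a ^ 2 - 1 = (a - 1) * (a + 1) := by ring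
        rw [hfac]
        exact mul_ne_zero (sub_ne_zero.mpr ha1) fun h => ham1 (eq_neg_of_add_eq_zero_left h)
      have hα : algebraMap F D a ≠ 0 := fun h =>
        ha0 ((algebraMap F D).injective (by rw [h, map_zero]))
      have hHu : Hu (algebraMap F D a) hα ∈ EUplane D ε :=
        Hu_mem hstar ε hε hs0 hs a hα
      rcases hG with h | h
      · -- B generator
        set u := algebraMap F D ((a ^ 2 - 1)⁻¹) * s with hudef
        have hu : star u = -ε * u := smul_mem_S hstar ε _ hs
        have e : ⁅Hu (algebraMap F D a) hα, Bu u⁆ = Bu s := by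
          rw [commB]
          congr 1
          exact key a ((a ^ 2 - 1)⁻¹) (coeff a h2) s
        have hGeq : G = Bu s := Units.ext h
        rw [hGeq, ← e]
        exact Subgroup.commutator_mem_commutator hHu (Bu_mem ε hu)
      · -- C generator
        have h2' : (a⁻¹) ^ 2 - 1 ≠ 0 := by
          intro hzero
          apply h2
          rw [sub_eq_zero, inv_pow, inv_eq_one] at hzero
          rw [sub_eq_zero, hzero]
        set u := algebraMap F D (((a⁻¹) ^ 2 - 1)⁻¹) * s with hudef
        have hu : star u = -ε * u := smul_mem_S hstar ε _ hs
        have e : ⁅Hu (algebraMap F D a) hα, Cu u⁆ = Cu s := by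
          rw [commC]
          congr 1
          rw [← map_inv₀]
          exact key a⁻¹ (((a⁻¹) ^ 2 - 1)⁻¹) (coeff a⁻¹ h2') s
        have hGeq : G = Cu s := Units.ext h
        rw [hGeq, ← e]
        exact Subgroup.commutator_mem_commutator hHu (Cu_mem ε hu)
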